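/- For a positive long root β, the depth of β, defined as the minimal integer k such that there exists w ∈ W of length k with w(β) < 0, equals ht∨(β), the height of the coroot β∨; for a positive short root β, the depth of β equals its height ht(β). -/

import Mathlib

open scoped RealInnerProductSpace Classical

noncomputable section

variable {V : Type} [NormedAddCommGroup V] [InnerProductSpace ℝ V] [FiniteDimensional ℝ V]

/-- The orthogonal reflection of `V` in the hyperplane orthogonal to `α`
(the reflection `s_α` when `α` is a root). -/
def sref (α : V) : V ≃ₗᵢ[ℝ] V := (Submodule.span ℝ {α})ᗮ.reflection

/-- The pairing `⟨β, γ∨⟩ = 2(β|γ)/(γ|γ)` of a vector with the coroot of `γ`. -/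
def cpair (β γ : V) : ℝ := 2 * ⟪β, γ⟫ / ⟪γ, γ⟫

/-- An irreducible reduced (crystallographic) root system in the real inner product
space `V`, the inner product being invariant under the Weyl group (automatic, since
reflections are isometries), normalized so that the shortest roots have squared length `1`. -/
structure NRootSystem (V : Type) [NormedAddCommGroup V] [InnerProductSpace ℝ V]
    [FiniteDimensional ℝ V] where
  Φ : Finset V
  nonempty : Φ.Nonempty
  zero_not_mem : (0 : V) ∉ Φ
  span_eq_top : Submodule.span ℝ (Φ : Set V) = ⊤
  reduced : ∀ α ∈ Φ, ∀ t : ℝ, t • α ∈ Φ → t = 1 ∨ t = -1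
  pairing_int : ∀ α ∈ Φ, ∀ β ∈ Φ, ∃ n : ℤ, 2 * ⟪β, α⟫ = n * ⟪α, α⟫
  reflect_mem : ∀ α ∈ Φ, ∀ β ∈ Φ, sref α β ∈ Φ
  irreducible : ∀ S : Finset V, S ⊆ Φ → S.Nonempty → (Φ \ S).Nonempty →
    ∃ α ∈ S, ∃ β ∈ Φ \ S, ⟪α, β⟫ ≠ 0
  norm_one_le : ∀ α ∈ Φ, 1 ≤ ⟪α, α⟫
  exists_norm_one : ∃ α ∈ Φ, ⟪α, α⟫ = 1

namespace NRootSystem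

variable (R : NRootSystem V)

/-- `r`, the maximal squared length of a root. -/
def r : ℝ := R.Φ.sup' R.nonempty fun α => ⟪α, α⟫

/-- long roots -/
def IsLong (α : V) : Prop := α ∈ R.Φ ∧ ⟪α, α⟫ = R.r

/-- short roots -/
def IsShort (α : V) : Prop := α ∈ R.Φ ∧ ⟪α, α⟫ < R.r

/-- The Weyl group `W`, generated by the reflections in the roots. -/
def Weyl : Subgroup (V ≃ₗᵢ[ℝ] V) := Subgroup.closure (sref '' (R.Φ : Set V))

end NRootSystem

/-- The standard parabolic subgroup `W_I` generated by the reflections in `I ⊆ Δ`. -/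
def WeylP (I : Finset V) : Subgroup (V ≃ₗᵢ[ℝ] V) := Subgroup.closure (sref '' (I : Set V))

/-- A base (set of simple roots) `Δ` of the root system, together with the
integral coordinates `coeff γ α` of each root `γ` in the basis `Δ`; every root is a
nonnegative or a nonpositive integral combination of the simple roots. -/
structure Base {V : Type} [NormedAddCommGroup V] [InnerProductSpace ℝ V]
    [FiniteDimensional ℝ V] (R : NRootSystem V) where
  Δ : Finset V
  subset : Δ ⊆ R.Φ
  indep : LinearIndependent ℝ (fun a : {x : V // x ∈ Δ} => (a : V))
  coeff : V → V → ℤ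
  coeff_spec : ∀ γ ∈ R.Φ, γ = ∑ α ∈ Δ, (coeff γ α : ℝ) • α
  coeff_sign : ∀ γ ∈ R.Φ, (∀ α ∈ Δ, 0 ≤ coeff γ α) ∨ (∀ α ∈ Δ, coeff γ α ≤ 0)

namespace Base

variable {R : NRootSystem V} (B : Base R)

/-- positive roots -/
def IsPos (γ : V) : Prop := γ ∈ R.Φ ∧ ∀ α ∈ B.Δ, 0 ≤ B.coeff γ α

/-- negative roots -/
def IsNeg (γ : V) : Prop := γ ∈ R.Φ ∧ ∀ α ∈ B.Δ, B.coeff γ α ≤ 0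

/-- the height of a root -/
def ht (γ : V) : ℤ := ∑ α ∈ B.Δ, B.coeff γ α

/-- the dual height `ht∨ γ = ht (γ∨)`: the height of the coroot `γ∨ = 2γ/(γ|γ)`
with respect to the basis of simple coroots `α∨ = 2α/(α|α)`, `α ∈ Δ`. -/
def htv (γ : V) : ℝ := ∑ α ∈ B.Δ, (B.coeff γ α : ℝ) * ⟪α, α⟫ / ⟪γ, γ⟫

/-- The length of `w`: the minimal length of an expression of `w` as a product of
simple reflections. -/
def len (w : V ≃ₗᵢ[ℝ] V) : ℕ :=
  sInf {n | ∃ g : Fin n → V, (∀ i, g i ∈ B.Δ) ∧ w = (List.ofFn fun i => sref (g i)).prod}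

/-- `w` is the longest element of the subgroup `H`. -/
def IsLongest (H : Subgroup (V ≃ₗᵢ[ℝ] V)) (w : V ≃ₗᵢ[ℝ] V) : Prop :=
  w ∈ H ∧ ∀ u ∈ H, B.len u ≤ B.len w

/-- `X_I = {w ∈ W | w(Φ_I⁺) ⊆ Φ⁺}`, the set of minimal length coset
representatives of `W/W_I`. -/
def XI (I : Finset V) : Set (V ≃ₗᵢ[ℝ] V) :=
  {w | w ∈ R.Weyl ∧
    ∀ γ, γ ∈ R.Φ → γ ∈ Submodule.span ℝ (I : Set V) → B.IsPos γ → B.IsPos (w γ)}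

/-- `h` is the highest root. -/
def IsHighest (h : V) : Prop :=
  h ∈ R.Φ ∧ ∀ γ ∈ R.Φ, ∀ α ∈ B.Δ, B.coeff γ α ≤ B.coeff h α

/-- `Ĩ = {α ∈ Δ | (h|α) = 0}`, the simple roots orthogonal to the highest root `h`. -/
def Itil (h : V) : Finset V := B.Δ.filter fun α => ⟪h, α⟫ = 0

/-- The level `L(α)` of a long root `α`, where `h` is the highest root:
`L(α) = ht∨(h) − ht∨(α)` if `α > 0` and `L(α) = ht∨(h) − ht∨(α) − 1` if `α < 0`. -/
def level (h α : V) : ℝ :=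
  if B.IsPos α then B.htv h - B.htv α else B.htv h - B.htv α - 1

/-- The elementary step relation `β →_γ α` on long roots (`γ` a positive root):
`α = s_γ(β)` and `L(α) = L(β) + 1`. -/
def Step (h γ β α : V) : Prop :=
  R.IsLong β ∧ R.IsLong α ∧ B.IsPos γ ∧ α = sref γ β ∧
    B.level h α = B.level h β + 1

/-- `g` is the sequence of positive roots of a path
`β = β₀ →_{g 0} β₁ →_{g 1} ⋯ →_{g (n-1)} β_n = α` from `β` to `α`. -/
def IsPathWord (h : V) {n : ℕ} (g : Fin n → V) (β α : V) : Prop :=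
  ∃ c : Fin (n + 1) → V, c 0 = β ∧ c (Fin.last n) = α ∧
    ∀ i : Fin n, B.Step h (g i) (c i.castSucc) (c i.succ)

/-- a path all of whose steps use simple roots -/
def IsSimplePathWord (h : V) {n : ℕ} (g : Fin n → V) (β α : V) : Prop :=
  B.IsPathWord h g β α ∧ ∀ i, g i ∈ B.Δ

/-- there is a path from `β` to `α`, i.e. `α ⪯ β` -/
def HasPath (h β α : V) : Prop := ∃ (n : ℕ) (g : Fin n → V), B.IsPathWord h g β α

/-- there is a simple path from `β` to `α` -/
def HasSimplePath (h β α : V) : Prop :=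
  ∃ (n : ℕ) (g : Fin n → V), B.IsSimplePathWord h g β α

/-- The covering relation `w →_γ w'` for the Bruhat order:
`w' = s_γ w` and `l(w') = l(w) + 1`, for a positive root `γ`. -/
def BStep (γ : V) (w w' : V ≃ₗᵢ[ℝ] V) : Prop :=
  B.IsPos γ ∧ w' = sref γ * w ∧ B.len w' = B.len w + 1

/-- The Bruhat order on `W`: the reflexive–transitive closure of the covering
relations. -/
def bruhatLE : (V ≃ₗᵢ[ℝ] V) → (V ≃ₗᵢ[ℝ] V) → Prop :=
  Relation.ReflTransGen fun w w' => ∃ γ, B.BStep γ w w'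

/-- `x` is an element of `W` with `x(β) = α` of the minimal possible length
`|L(α) − L(β)|` (this is the element `x_{αβ}` when it exists). -/
def MinTake (h β α : V) (x : V ≃ₗᵢ[ℝ] V) : Prop :=
  x ∈ R.Weyl ∧ x β = α ∧ (B.len x : ℝ) = |B.level h α - B.level h β|

/-- `g` is a reduced expression of `x` as a product of simple reflections. -/
def IsReducedWord {n : ℕ} (g : Fin n → V) (x : V ≃ₗᵢ[ℝ] V) : Prop :=
  (∀ i, g i ∈ B.Δ) ∧ x = (List.ofFn fun i => sref (g i)).prod ∧ n = B.len x

/-- The depth of a positive root `β`: the minimal integer `k` such that there is an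
element `w` of `W` of length `k` with `w(β) < 0`. -/
def depth (β : V) : ℕ := sInf {n | ∃ w ∈ R.Weyl, B.len w = n ∧ B.IsNeg (w β)}

end Base

section DepthProof
set_option linter.unusedSectionVars false
set_option maxHeartbeats 1000000

theorem sref_apply (α β : V) : sref α β = β - cpair β α • α := by
  rw [sref, Submodule.reflection_orthogonal_apply, Submodule.reflection_singleton_apply, cpair]
  have : ((‖α‖ : ℝ))^2 = ⟪α,α⟫ := (real_inner_self_eq_norm_sq α).symm
  simp only [RCLike.ofReal_real_eq_id, id_eq, this, real_inner_comm α β, two_smul]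
  rw [div_eq_mul_inv, div_eq_mul_inv]
  module

theorem sref_sref (α β : V) : sref α (sref α β) = β := Submodule.reflection_involutive _ β

theorem sref_inv (α : V) : (sref α)⁻¹ = sref α := by
  have : (sref α)⁻¹ = (sref α).symm := rfl
  rw [this, sref, Submodule.reflection_symm]

theorem sref_self (α : V) : sref α α = -α := by
  by_cases h : α = 0
  · simp [h, sref_apply]
  · rw [sref_apply, cpair, mul_div_assoc, div_self (inner_self_ne_zero.mpr h)]
    module

theorem inner_weyl (f : V ≃ₗᵢ[ℝ] V) (x y : V) : ⟪f x, f y⟫ = ⟪x, y⟫ :=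
  f.inner_map_map x y

theorem sref_conj (f : V ≃ₗᵢ[ℝ] V) (α : V) : sref (f α) = f * sref α * f⁻¹ := by
  ext x
  show sref (f α) x = f (sref α (f.symm x))
  rw [sref_apply, sref_apply, map_sub, f.apply_symm_apply, map_smul]
  have h1 : ⟪f.symm x, α⟫ = ⟪x, f α⟫ := by
    rw [← f.inner_map_map (f.symm x) α, f.apply_symm_apply]
  have h2 : (⟪α,α⟫ : ℝ) = ⟪f α, f α⟫ := (f.inner_map_map α α).symm
  rw [cpair, cpair, h1, h2]

theorem sref_neg_root (α : V) : sref (-α) = sref α := by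
  ext x
  rw [sref_apply, sref_apply, cpair, cpair, inner_neg_neg, inner_neg_right]
  rw [smul_neg, ← neg_smul]
  congr 1
  field_simp

namespace DepthPf
variable {R : NRootSystem V} (B : Base R)

theorem root_ne_zero {γ : V} (h : γ ∈ R.Φ) : γ ≠ 0 := fun e => R.zero_not_mem (e ▸ h)

theorem inner_self_pos' {γ : V} (h : γ ∈ R.Φ) : (0:ℝ) < ⟪γ,γ⟫ := by
  linarith [R.norm_one_le γ h]

theorem neg_mem {γ : V} (h : γ ∈ R.Φ) : -γ ∈ R.Φ := by
  have := R.reflect_mem γ h γ h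
  rwa [sref_self] at this

theorem cpair_int {γ α : V} (hγ : γ ∈ R.Φ) (hα : α ∈ R.Φ) : ∃ n : ℤ, cpair γ α = n := by
  obtain ⟨n, hn⟩ := R.pairing_int α hα γ hγ
  exact ⟨n, by rw [cpair, hn, mul_div_assoc, div_self (ne_of_gt (inner_self_pos' hα)), mul_one]⟩

theorem le_r {γ : V} (h : γ ∈ R.Φ) : ⟪γ,γ⟫ ≤ R.r :=
  Finset.le_sup' (fun α : V => (⟪α,α⟫ : ℝ)) h

theorem exists_long : ∃ δ ∈ R.Φ, ⟪δ,δ⟫ = R.r := by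
  obtain ⟨δ, hδ, h⟩ := Finset.exists_mem_eq_sup' R.nonempty (fun α : V => (⟪α,α⟫ : ℝ))
  exact ⟨δ, hδ, h.symm⟩

theorem coeff_unique (f : V → ℝ) (h : ∑ α ∈ B.Δ, f α • α = 0) : ∀ α ∈ B.Δ, f α = 0 := by
  have hi := linearIndependent_iff'.mp B.indep Finset.univ (fun a => f a)
  have hs : ∑ a : {x : V // x ∈ B.Δ}, f a • (a : V) = 0 := by
    rw [← h]
    exact Finset.sum_attach B.Δ (fun x => f x • x)
  intro α hα
  exact hi hs ⟨α, hα⟩ (Finset.mem_univ _)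

theorem coeff_eq {γ : V} (hγ : γ ∈ R.Φ) (c : V → ℝ) (hc : γ = ∑ α ∈ B.Δ, c α • α) :
    ∀ α ∈ B.Δ, (B.coeff γ α : ℝ) = c α := by
  intro α hα
  have h0 : ∑ α ∈ B.Δ, ((B.coeff γ α : ℝ) - c α) • α = 0 := by
    rw [Finset.sum_congr rfl (fun x _ => sub_smul _ _ x), Finset.sum_sub_distrib,
      ← B.coeff_spec γ hγ, ← hc, sub_self]
  have := coeff_unique B _ h0 α hα
  linarith

theorem coeff_simple {α : V} (hα : α ∈ B.Δ) {δ : V} (hδ : δ ∈ B.Δ) :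
    B.coeff α δ = if δ = α then 1 else 0 := by
  have h := coeff_eq B (B.subset hα) (fun δ => if δ = α then (1:ℝ) else 0) ?_ δ hδ
  · by_cases hd : δ = α <;> simp only [hd, if_true, if_false] at h ⊢ <;> exact_mod_cast h
  · have he : ∀ x ∈ B.Δ, (if x = α then (1:ℝ) else 0) • x = if x = α then x else 0 := by
      intro x _; split <;> simp
    rw [Finset.sum_congr rfl he, Finset.sum_ite_eq' B.Δ α (fun x => x)]
    simp [hα]

theorem coeff_neg {γ : V} (hγ : γ ∈ R.Φ) {δ : V} (hδ : δ ∈ B.Δ) :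
    B.coeff (-γ) δ = - B.coeff γ δ := by
  have h := coeff_eq B (neg_mem hγ) (fun δ => -(B.coeff γ δ : ℝ)) ?_ δ hδ
  · exact_mod_cast h
  · conv_lhs => rw [B.coeff_spec γ hγ]
    rw [← Finset.sum_neg_distrib]
    exact Finset.sum_congr rfl fun x _ => (neg_smul _ _).symm

theorem coeff_sref {α : V} (hα : α ∈ B.Δ) {γ : V} (hγ : γ ∈ R.Φ) {n : ℤ}
    (hn : cpair γ α = (n:ℝ)) {δ : V} (hδ : δ ∈ B.Δ) :
    B.coeff (sref α γ) δ = B.coeff γ δ - if δ = α then n else 0 := by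
  have hmem : sref α γ ∈ R.Φ := R.reflect_mem α (B.subset hα) γ hγ
  have h := coeff_eq B hmem
    (fun δ => (B.coeff γ δ : ℝ) - if δ = α then (n:ℝ) else 0) ?_ δ hδ
  · by_cases hd : δ = α <;> simp only [hd, if_true, if_false] at h ⊢ <;> exact_mod_cast h
  · rw [sref_apply, hn]
    rw [Finset.sum_congr rfl (fun x _ => sub_smul _ _ x), Finset.sum_sub_distrib]
    conv_lhs => rw [B.coeff_spec γ hγ]
    congr 1
    have he : ∀ x ∈ B.Δ, (if x = α then (n:ℝ) else 0) • x = if x = α then (n:ℝ) • x else 0 := by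
      intro x _; split <;> simp
    rw [Finset.sum_congr rfl he, Finset.sum_ite_eq' B.Δ α (fun x => (n:ℝ) • x)]
    simp [hα]

theorem pos_or_neg {γ : V} (hγ : γ ∈ R.Φ) : B.IsPos γ ∨ B.IsNeg γ := by
  rcases B.coeff_sign γ hγ with h | h
  · exact Or.inl ⟨hγ, h⟩
  · exact Or.inr ⟨hγ, h⟩

theorem not_pos_and_neg {γ : V} (hγ : γ ∈ R.Φ) : ¬ (B.IsPos γ ∧ B.IsNeg γ) := by
  rintro ⟨⟨-, hp⟩, ⟨-, hn⟩⟩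
  have hz : ∀ δ ∈ B.Δ, ((B.coeff γ δ : ℝ)) = 0 := by
    intro δ hδ
    have := hp δ hδ; have := hn δ hδ
    have : B.coeff γ δ = 0 := le_antisymm (hn δ hδ) (hp δ hδ)
    exact_mod_cast this
  have : γ = 0 := by
    rw [B.coeff_spec γ hγ]
    exact Finset.sum_eq_zero fun δ hδ => by rw [hz δ hδ, zero_smul]
  exact root_ne_zero hγ this

theorem isNeg_neg {γ : V} (hγ : γ ∈ R.Φ) (h : B.IsPos γ) : B.IsNeg (-γ) := by
  refine ⟨neg_mem hγ, fun δ hδ => ?_⟩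
  rw [coeff_neg B hγ hδ]
  simpa using h.2 δ hδ

theorem isPos_neg {γ : V} (hγ : γ ∈ R.Φ) (h : B.IsNeg γ) : B.IsPos (-γ) := by
  refine ⟨neg_mem hγ, fun δ hδ => ?_⟩
  rw [coeff_neg B hγ hδ]
  simpa using h.2 δ hδ

theorem simple_pos {α : V} (hα : α ∈ B.Δ) : B.IsPos α := by
  refine ⟨B.subset hα, fun δ hδ => ?_⟩
  rw [coeff_simple B hα hδ]
  split <;> norm_num

theorem pos_ne_neg_simple {γ : V} (h : B.IsPos γ) {α : V} (hα : α ∈ B.Δ) : γ ≠ -α := by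
  intro he
  have h1 := h.2 α hα
  rw [he, coeff_neg B (B.subset hα) hα, coeff_simple B hα hα] at h1
  simp at h1

theorem ht_pos {γ : V} (h : B.IsPos γ) : 1 ≤ B.ht γ := by
  by_contra hc
  push_neg at hc
  have hle : B.ht γ ≤ 0 := by omega
  have hz : ∀ δ ∈ B.Δ, B.coeff γ δ = 0 := by
    intro δ hδ
    by_contra hne
    have h1 : 1 ≤ B.coeff γ δ := lt_of_le_of_ne (h.2 δ hδ) (Ne.symm hne)
    have : 1 ≤ B.ht γ := by
      calc (1:ℤ) ≤ B.coeff γ δ := h1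
      _ ≤ ∑ x ∈ B.Δ, B.coeff γ x := Finset.single_le_sum (fun x hx => h.2 x hx) hδ
    omega
  have : γ = 0 := by
    rw [B.coeff_spec γ h.1]
    exact Finset.sum_eq_zero fun δ hδ => by rw [hz δ hδ]; simp
  exact root_ne_zero h.1 this

theorem ht_simple {α : V} (hα : α ∈ B.Δ) : B.ht α = 1 := by
  rw [Base.ht, Finset.sum_congr rfl (fun x hx => coeff_simple B hα hx),
    Finset.sum_ite_eq' B.Δ α (fun _ => (1:ℤ))]
  simp [hα]

theorem htv_simple {α : V} (hα : α ∈ B.Δ) : B.htv α = 1 := by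
  rw [Base.htv]
  have he : ∀ x ∈ B.Δ, (B.coeff α x : ℝ) * ⟪x,x⟫ / ⟪α,α⟫ =
      if x = α then ⟪α,α⟫/⟪α,α⟫ else 0 := by
    intro x hx
    rw [coeff_simple B hα hx]
    split <;> simp_all
  rw [Finset.sum_congr rfl he, Finset.sum_ite_eq' B.Δ α (fun _ => (⟪α,α⟫/⟪α,α⟫ : ℝ))]
  simp [hα, div_self (ne_of_gt (inner_self_pos' (B.subset hα))), root_ne_zero (B.subset hα)]

theorem exists_inner_pos {γ : V} (h : B.IsPos γ) : ∃ α ∈ B.Δ, 0 < ⟪γ,α⟫ := by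
  by_contra hc
  push_neg at hc
  have hid : (⟪γ,γ⟫:ℝ) ≤ 0 := by
    have h2 : (⟪γ,γ⟫:ℝ) = ⟪γ, ∑ α ∈ B.Δ, (B.coeff γ α : ℝ) • α⟫ := by
      rw [← B.coeff_spec γ h.1]
    rw [h2, inner_sum]
    apply Finset.sum_nonpos
    intro α hα
    rw [real_inner_smul_right]
    have h1 : (0:ℝ) ≤ (B.coeff γ α : ℝ) := by exact_mod_cast h.2 α hα
    exact mul_nonpos_of_nonneg_of_nonpos h1 (hc α hα)
  linarith [inner_self_pos' h.1]

theorem sref_simple_pos {α : V} (hα : α ∈ B.Δ) {γ : V} (h : B.IsPos γ) (hne : γ ≠ α) :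
    B.IsPos (sref α γ) := by
  have hmem : sref α γ ∈ R.Φ := R.reflect_mem α (B.subset hα) γ h.1
  obtain ⟨n, hn⟩ := cpair_int h.1 (B.subset hα)
  rcases pos_or_neg B hmem with hp | hneg
  · exact hp
  -- all coefficients at δ ≠ α vanish, so γ is a multiple of α
  have hz : ∀ δ ∈ B.Δ, δ ≠ α → B.coeff γ δ = 0 := by
    intro δ hδ hne'
    have h1 := coeff_sref B hα h.1 hn hδ
    rw [if_neg hne', sub_zero] at h1
    have := hneg.2 δ hδ
    rw [h1] at this
    exact le_antisymm this (h.2 δ hδ)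
  have hγα : γ = ((B.coeff γ α : ℝ)) • α := by
    conv_lhs => rw [B.coeff_spec γ h.1]
    have he : ∀ x ∈ B.Δ, (B.coeff γ x : ℝ) • x = if x = α then (B.coeff γ α : ℝ) • x else 0 := by
      intro x hx
      split
      · next hxa => rw [hxa]
      · next hxa => rw [hz x hx hxa]; simp
    rw [Finset.sum_congr rfl he, Finset.sum_ite_eq' B.Δ α (fun x => (B.coeff γ α : ℝ) • x)]
    simp [hα]
  rcases R.reduced α (B.subset hα) _ (hγα ▸ h.1) with h1 | h1
  · exact absurd (by rw [hγα, h1, one_smul]) hne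
  · exfalso
    have : (B.coeff γ α : ℝ) = -1 := h1
    have h2 : B.coeff γ α = -1 := by exact_mod_cast this
    have := h.2 α hα
    omega

theorem sref_simple_neg_imp {α : V} (hα : α ∈ B.Δ) {γ : V} (h : B.IsPos γ)
    (hneg : B.IsNeg (sref α γ)) : γ = α := by
  by_contra hne
  exact not_pos_and_neg B (R.reflect_mem α (B.subset hα) γ h.1)
    ⟨sref_simple_pos B hα h hne, hneg⟩

theorem ht_sref {α : V} (hα : α ∈ B.Δ) {γ : V} (hγ : γ ∈ R.Φ) {n : ℤ}
    (hn : cpair γ α = (n:ℝ)) : B.ht (sref α γ) = B.ht γ - n := by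
  rw [Base.ht, Base.ht, Finset.sum_congr rfl (fun x hx => coeff_sref B hα hγ hn hx),
    Finset.sum_sub_distrib, Finset.sum_ite_eq' B.Δ α (fun _ => n)]
  simp [hα]

theorem htv_sref {α : V} (hα : α ∈ B.Δ) {γ : V} (hγ : γ ∈ R.Φ) {n : ℤ}
    (hn : cpair γ α = (n:ℝ)) : B.htv (sref α γ) = B.htv γ - cpair α γ := by
  have hγγ : (⟪sref α γ, sref α γ⟫ : ℝ) = ⟪γ,γ⟫ := inner_weyl _ γ γ
  have hαα := inner_self_pos' (B.subset hα)
  have hγp := inner_self_pos' hγ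
  have h2 : (n:ℝ) * ⟪α,α⟫ = 2 * ⟪γ,α⟫ := by
    rw [cpair] at hn
    field_simp at hn
    linarith
  rw [Base.htv, Base.htv, hγγ]
  have he : ∀ x ∈ B.Δ, (B.coeff (sref α γ) x : ℝ) * ⟪x,x⟫ / ⟪γ,γ⟫ =
      (B.coeff γ x : ℝ) * ⟪x,x⟫ / ⟪γ,γ⟫ - (if x = α then (n:ℝ) * ⟪α,α⟫ / ⟪γ,γ⟫ else 0) := by
    intro x hx
    rw [coeff_sref B hα hγ hn hx]
    push_cast
    split
    · next hxa => subst hxa; ring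
    · ring
  rw [Finset.sum_congr rfl he, Finset.sum_sub_distrib,
    Finset.sum_ite_eq' B.Δ α (fun _ => (n:ℝ) * ⟪α,α⟫ / ⟪γ,γ⟫), if_pos hα]
  congr 1
  rw [cpair, h2, real_inner_comm γ α]

theorem parallel_of_cs_eq {x y : V} (hx : x ∈ R.Φ) (hy : y ∈ R.Φ)
    (h : (⟪x,y⟫:ℝ)^2 = ⟪x,x⟫ * ⟪y,y⟫) : x = y ∨ x = -y := by
  have hb := inner_self_pos' hy
  have hz : (⟪x - (⟪x,y⟫/⟪y,y⟫) • y, x - (⟪x,y⟫/⟪y,y⟫) • y⟫ : ℝ) = 0 := by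
    simp only [inner_sub_left, inner_sub_right, real_inner_smul_left, real_inner_smul_right]
    field_simp
    rw [real_inner_comm x y]
    linear_combination -h
  have hxy : x = ((⟪x,y⟫/⟪y,y⟫ : ℝ)) • y := by
    have h0 : x - ((⟪x,y⟫/⟪y,y⟫:ℝ)) • y = 0 := inner_self_eq_zero.mp hz
    linear_combination (norm := module) h0
  rcases R.reduced y hy _ (hxy ▸ hx) with h1 | h1
  · left; rw [hxy, h1, one_smul]
  · right; rw [hxy, h1, neg_one_smul]


theorem cpair_abs_le_one {x y : V} (hx : x ∈ R.Φ) (hy : y ∈ R.Φ)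
    (hab : ⟪x,x⟫ ≤ ⟪y,y⟫) (h1 : x ≠ y) (h2 : x ≠ -y) : |cpair x y| ≤ 1 := by
  obtain ⟨m', hm'⟩ := cpair_int hx hy
  obtain ⟨m, hm⟩ := cpair_int hy hx
  have ha := inner_self_pos' hx
  have hb := inner_self_pos' hy
  have hcs : (⟪x,y⟫:ℝ)^2 ≤ ⟪x,x⟫ * ⟪y,y⟫ := by
    have := real_inner_mul_inner_self_le x y
    nlinarith [this]
  have hprod : (m:ℝ) * (m':ℝ) = 4 * (⟪x,y⟫:ℝ)^2 / (⟪x,x⟫ * ⟪y,y⟫) := by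
    rw [← hm, ← hm', cpair, cpair, real_inner_comm y x]
    field_simp
    ring
  have hsq : ((m':ℝ))^2 ≤ (m:ℝ) * (m':ℝ) := by
    rw [hprod, ← hm', cpair, div_pow, div_le_div_iff₀ (by positivity) (by positivity)]
    nlinarith [mul_nonneg (mul_nonneg (sq_nonneg (⟪x,y⟫:ℝ)) hb.le) (sub_nonneg.mpr hab)]
  have hle4 : (m:ℝ) * (m':ℝ) ≤ 4 := by
    rw [hprod, div_le_iff₀ (by positivity)]
    nlinarith
  have hm'sq : m'^2 ≤ 4 := by exact_mod_cast le_trans hsq hle4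
  have hbd : -2 ≤ m' ∧ m' ≤ 2 := ⟨by nlinarith, by nlinarith⟩
  have hdisj : m'^2 ≤ 1 ∨ m'^2 = 4 := by
    obtain ⟨hl, hr⟩ := hbd
    interval_cases m' <;> simp
  rcases hdisj with hc | hc
  · rw [hm']
    have h3 : |m'| ≤ 1 := by nlinarith [abs_nonneg m', sq_abs m']
    calc |((m':ℤ):ℝ)| = ((|m'| : ℤ) : ℝ) := by rw [Int.cast_abs]
    _ ≤ 1 := by exact_mod_cast h3
  · exfalso
    have h4 : ((m':ℝ))^2 = 4 := by exact_mod_cast hc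
    have h44 : (m:ℝ)*(m':ℝ) = 4 := le_antisymm hle4 (h4 ▸ hsq)
    rw [h44] at hprod
    have heq : (⟪x,y⟫:ℝ)^2 = ⟪x,x⟫ * ⟪y,y⟫ := by
      field_simp at hprod
      linarith
    rcases parallel_of_cs_eq hx hy heq with h | h
    · exact h1 h
    · exact h2 h

theorem ratio_int {x y : V} (hx : x ∈ R.Φ) (hy : y ∈ R.Φ) (hp : (⟪x,y⟫:ℝ) ≠ 0)
    (hab : ⟪x,x⟫ ≤ ⟪y,y⟫) : ∃ m : ℤ, ⟪y,y⟫ = (m:ℝ) * ⟪x,x⟫ ∧ 1 ≤ m ∧ m ≤ 3 := by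
  have ha := inner_self_pos' hx
  have hb := inner_self_pos' hy
  by_cases he1 : x = y
  · exact ⟨1, by subst he1; norm_num, le_refl _, by norm_num⟩
  by_cases he2 : x = -y
  · refine ⟨1, ?_, le_refl _, by norm_num⟩
    rw [he2]
    norm_num
  obtain ⟨m', hm'⟩ := cpair_int hx hy
  obtain ⟨m, hm⟩ := cpair_int hy hx
  have habs := cpair_abs_le_one hx hy hab he1 he2
  have hma : (m:ℝ) * ⟪x,x⟫ = 2 * ⟪x,y⟫ := by
    rw [cpair] at hm
    field_simp at hm
    have hc : (⟪y,x⟫:ℝ) = ⟪x,y⟫ := real_inner_comm x y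
    linarith
  have hm'b : (m':ℝ) * ⟪y,y⟫ = 2 * ⟪x,y⟫ := by
    rw [cpair] at hm'
    field_simp at hm'
    linarith
  have hm'ne : m' ≠ 0 := by
    intro hc
    rw [hc] at hm'b
    push_cast at hm'b
    apply hp
    linarith
  have h1 : |m'| ≤ 1 := by
    rw [hm'] at habs
    rw [← Int.cast_abs] at habs
    exact_mod_cast habs
  have hm'sq : m' = 1 ∨ m' = -1 := by
    have := abs_le.mp h1
    omega
  have hm'sqR : ((m':ℝ))^2 = 1 := by
    rcases hm'sq with h | h <;> rw [h] <;> norm_num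
  have hprod : (m:ℝ) * (m':ℝ) = 4 * (⟪x,y⟫:ℝ)^2 / (⟪x,x⟫ * ⟪y,y⟫) := by
    rw [← hm, ← hm', cpair, cpair, real_inner_comm y x]
    field_simp
    ring
  have hpos : 0 < (m:ℝ) * (m':ℝ) := by
    rw [hprod]
    have : (0:ℝ) < (⟪x,y⟫:ℝ)^2 := by positivity
    positivity
  have hlt4 : (m:ℝ) * (m':ℝ) < 4 := by
    have hcs : (⟪x,y⟫:ℝ)^2 ≤ ⟪x,x⟫ * ⟪y,y⟫ := by
      have := real_inner_mul_inner_self_le x y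
      nlinarith [this]
    have hne : (⟪x,y⟫:ℝ)^2 ≠ ⟪x,x⟫ * ⟪y,y⟫ := by
      intro hc
      rcases parallel_of_cs_eq hx hy hc with h | h
      · exact he1 h
      · exact he2 h
    rw [hprod, div_lt_iff₀ (by positivity)]
    have : (⟪x,y⟫:ℝ)^2 < ⟪x,x⟫ * ⟪y,y⟫ := lt_of_le_of_ne hcs hne
    nlinarith
  refine ⟨m * m', ?_, ?_, ?_⟩
  · push_cast
    linear_combination (m':ℝ) * hm'b - (m':ℝ) * hma - (⟪y,y⟫:ℝ) * hm'sqR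
  · have h0 : (0:ℝ) < ((m*m' : ℤ):ℝ) := by push_cast; linarith
    have : (0:ℤ) < m * m' := by exact_mod_cast h0
    omega
  · have : ((m*m' : ℤ):ℝ) < 4 := by push_cast; linarith
    have h4 : (m*m' : ℤ) < 4 := by exact_mod_cast this
    omega

theorem sref_mem_weyl {γ : V} (hγ : γ ∈ R.Φ) : sref γ ∈ R.Weyl :=
  Subgroup.subset_closure ⟨γ, hγ, rfl⟩

theorem weyl_maps_root {w : V ≃ₗᵢ[ℝ] V} (hw : w ∈ R.Weyl) : ∀ γ ∈ R.Φ, w γ ∈ R.Φ := by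
  have key : ∀ w : V ≃ₗᵢ[ℝ] V, w ∈ R.Weyl → (∀ γ ∈ R.Φ, w γ ∈ R.Φ) ∧ (∀ γ ∈ R.Φ, w⁻¹ γ ∈ R.Φ) := by
    intro w hw
    refine Subgroup.closure_induction
      (p := fun w _ => (∀ γ ∈ R.Φ, w γ ∈ R.Φ) ∧ (∀ γ ∈ R.Φ, w⁻¹ γ ∈ R.Φ)) ?_ ?_ ?_ ?_ hw
    · rintro x ⟨α, hα, rfl⟩
      refine ⟨fun γ hγ => R.reflect_mem α hα γ hγ, fun γ hγ => ?_⟩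
      rw [sref_inv]
      exact R.reflect_mem α hα γ hγ
    · exact ⟨fun γ hγ => hγ, fun γ hγ => hγ⟩
    · rintro x y hx hy ⟨hx1, hx2⟩ ⟨hy1, hy2⟩
      constructor
      · intro γ hγ
        exact hx1 _ (hy1 γ hγ)
      · intro γ hγ
        have : (x*y)⁻¹ = y⁻¹ * x⁻¹ := mul_inv_rev x y
        rw [this]
        exact hy2 _ (hx2 γ hγ)
    · rintro x hx ⟨h1, h2⟩
      exact ⟨h2, by simpa using h1⟩
  exact (key w hw).1

theorem orbit_mem {w : V ≃ₗᵢ[ℝ] V} (hw : w ∈ R.Weyl) {β : V} (hβ : β ∈ R.Φ) :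
    w β ∈ R.Φ := weyl_maps_root hw β hβ

theorem root_sub_span {β : V} (hβ : β ∈ R.Φ) :
    ∀ γ ∈ R.Φ, γ ∈ Submodule.span ℝ {v : V | ∃ w ∈ R.Weyl, w β = v} := by
  set U := Submodule.span ℝ {v : V | ∃ w ∈ R.Weyl, w β = v} with hU
  have horb : ∀ v, (∃ w ∈ R.Weyl, w β = v) → v ∈ U :=
    fun v hv => Submodule.subset_span hv
  have hortho : ∀ δ ∈ R.Φ, δ ∉ U → ∀ v, (∃ w ∈ R.Weyl, w β = v) → (⟪v,δ⟫:ℝ) = 0 := by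
    rintro δ hδ hδU v ⟨w, hw, rfl⟩
    by_contra hne
    apply hδU
    have h1 : sref δ (w β) ∈ U := horb _ ⟨sref δ * w, mul_mem (sref_mem_weyl hδ) hw, rfl⟩
    have h2 : (w β : V) ∈ U := horb _ ⟨w, hw, rfl⟩
    have h3 : cpair (w β) δ • δ ∈ U := by
      have : cpair (w β) δ • δ = w β - sref δ (w β) := by
        rw [sref_apply]; abel
      rw [this]
      exact Submodule.sub_mem _ h2 h1
    have hc : cpair (w β) δ ≠ 0 := by
      rw [cpair]
      intro hc
      apply hne
      have := inner_self_pos' hδ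
      field_simp at hc
      linarith [hc, mul_zero (⟪δ, δ⟫:ℝ)]
    have := Submodule.smul_mem _ (cpair (w β) δ)⁻¹ h3
    rwa [inv_smul_smul₀ hc] at this
  by_contra hc
  push_neg at hc
  obtain ⟨γ0, hγ0, hγ0U⟩ := hc
  set S : Finset V := R.Φ.filter (fun γ => γ ∈ U) with hS
  have hSsub : S ⊆ R.Φ := Finset.filter_subset _ _
  have hSne : S.Nonempty := ⟨β, Finset.mem_filter.mpr ⟨hβ, horb β ⟨1, one_mem _, rfl⟩⟩⟩
  have hDne : (R.Φ \ S).Nonempty := ⟨γ0, Finset.mem_sdiff.mpr ⟨hγ0, by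
    intro hmem
    exact hγ0U (Finset.mem_filter.mp hmem).2⟩⟩
  obtain ⟨α, hαS, δ, hδD, hne⟩ := R.irreducible S hSsub hSne hDne
  obtain ⟨hδΦ, hδS⟩ := Finset.mem_sdiff.mp hδD
  have hδU : δ ∉ U := fun h => hδS (Finset.mem_filter.mpr ⟨hδΦ, h⟩)
  have hUle : U ≤ (ℝ ∙ δ)ᗮ := by
    rw [hU]
    apply Submodule.span_le.mpr
    intro v hv
    rw [SetLike.mem_coe, Submodule.mem_orthogonal_singleton_iff_inner_left]
    exact hortho δ hδΦ hδU v hv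
  have hαU : (α:V) ∈ U := (Finset.mem_filter.mp hαS).2
  have : (⟪α,δ⟫:ℝ) = 0 := Submodule.mem_orthogonal_singleton_iff_inner_left.mp (hUle hαU)
  exact hne this

theorem exists_conj_inner_ne {x y : V} (hx : x ∈ R.Φ) (hy : y ∈ R.Φ) :
    ∃ z ∈ R.Φ, (⟪z,z⟫:ℝ) = ⟪x,x⟫ ∧ (⟪z,y⟫:ℝ) ≠ 0 := by
  by_contra hc
  push_neg at hc
  have hall : ∀ v, (∃ w ∈ R.Weyl, w x = v) → (⟪v,y⟫:ℝ) = 0 := by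
    rintro v ⟨w, hw, rfl⟩
    exact hc (w x) (orbit_mem hw hx) (inner_weyl w x x)
  have hUle : Submodule.span ℝ {v : V | ∃ w ∈ R.Weyl, w x = v} ≤ (ℝ ∙ y)ᗮ := by
    apply Submodule.span_le.mpr
    intro v hv
    rw [SetLike.mem_coe, Submodule.mem_orthogonal_singleton_iff_inner_left]
    exact hall v hv
  have hyU : (y:V) ∈ Submodule.span ℝ {v : V | ∃ w ∈ R.Weyl, w x = v} :=
    root_sub_span hx y hy
  have : (⟪y,y⟫:ℝ) = 0 := Submodule.mem_orthogonal_singleton_iff_inner_left.mp (hUle hyU)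
  exact (ne_of_gt (inner_self_pos' hy)) this

theorem short_norm_one {β : V} (hβ : β ∈ R.Φ) (h : (⟪β,β⟫:ℝ) < R.r) : (⟪β,β⟫:ℝ) = 1 := by
  by_contra hne
  have h1 : (1:ℝ) < ⟪β,β⟫ := lt_of_le_of_ne (R.norm_one_le β hβ) (Ne.symm hne)
  obtain ⟨u, hu, huu⟩ := R.exists_norm_one
  obtain ⟨δ, hδ, hδδ⟩ := exists_long (R := R)
  -- conjugate of β meeting u
  obtain ⟨z1, hz1, hz1n, hz1i⟩ := exists_conj_inner_ne hβ hu
  obtain ⟨m1, hm1, hm1a, hm1b⟩ := ratio_int hu hz1 (by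
      rw [real_inner_comm]; exact hz1i) (by rw [huu, hz1n]; linarith)
  rw [hz1n, huu, mul_one] at hm1
  have hm1ge : 2 ≤ m1 := by
    rcases lt_or_ge m1 2 with hl | hl
    · exfalso
      have : m1 = 1 := by omega
      rw [this] at hm1
      push_cast at hm1
      linarith
    · exact hl
  -- conjugate of β meeting δ
  obtain ⟨z2, hz2, hz2n, hz2i⟩ := exists_conj_inner_ne hβ hδ
  obtain ⟨m2, hm2, hm2a, hm2b⟩ := ratio_int hz2 hδ hz2i (by rw [hz2n, hδδ]; linarith)
  rw [hz2n, hδδ] at hm2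
  have hm2ge : 2 ≤ m2 := by
    rcases lt_or_ge m2 2 with hl | hl
    · exfalso
      have : m2 = 1 := by omega
      rw [this] at hm2
      push_cast at hm2
      linarith
    · exact hl
  -- conjugate of u meeting δ
  obtain ⟨z3, hz3, hz3n, hz3i⟩ := exists_conj_inner_ne hu hδ
  obtain ⟨m3, hm3, hm3a, hm3b⟩ := ratio_int hz3 hδ hz3i (by
      rw [hz3n, huu]; linarith [le_r hδ, R.norm_one_le δ hδ, hδδ])
  rw [hz3n, huu, hδδ, mul_one] at hm3
  -- r = m3 ≤ 3 but r = m2 * s ≥ 2*2 = 4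
  have hr3 : R.r ≤ 3 := by
    rw [hm3]
    exact_mod_cast hm3b
  have hr4 : (4:ℝ) ≤ R.r := by
    rw [hm2, hm1]
    have h2 : (2:ℝ) ≤ (m1:ℝ) := by exact_mod_cast hm1ge
    have h3 : (2:ℝ) ≤ (m2:ℝ) := by exact_mod_cast hm2ge
    nlinarith
  linarith

theorem cpair_pos_int_ge_one {x y : V} (hx : x ∈ R.Φ) (hy : y ∈ R.Φ)
    (hip : 0 < (⟪x,y⟫:ℝ)) : ∃ n : ℤ, cpair x y = (n:ℝ) ∧ 1 ≤ n := by
  obtain ⟨n, hn⟩ := cpair_int hx hy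
  refine ⟨n, hn, ?_⟩
  have hpos : (0:ℝ) < cpair x y := by
    rw [cpair]
    exact div_pos (by linarith) (inner_self_pos' hy)
  rw [hn] at hpos
  exact_mod_cast hpos

theorem cpair_eq_one {x y : V} (hx : x ∈ R.Φ) (hy : y ∈ R.Φ) (hab : ⟪x,x⟫ ≤ ⟪y,y⟫)
    (h1 : x ≠ y) (h2 : x ≠ -y) (hip : 0 < (⟪x,y⟫:ℝ)) : cpair x y = 1 := by
  obtain ⟨n, hn, hge⟩ := cpair_pos_int_ge_one hx hy hip
  have habs := cpair_abs_le_one hx hy hab h1 h2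
  rw [hn] at habs ⊢
  rw [← Int.cast_abs] at habs
  have habs2 : |n| ≤ 1 := by exact_mod_cast habs
  obtain ⟨hb1, hb2⟩ := abs_le.mp habs2
  have : n = 1 := by omega
  rw [this]
  norm_num

theorem ne_neg_simple' {γ : V} (h : B.IsPos γ) {α : V} (hα : α ∈ B.Δ) : α ≠ -γ := by
  intro he
  apply pos_ne_neg_simple B h hα
  rw [he]
  simp

theorem sref_pos_mem_ws : ∀ n : ℕ, ∀ γ, B.IsPos γ → (B.ht γ).toNat ≤ n →
    sref γ ∈ WeylP B.Δ := by
  intro n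
  induction n with
  | zero =>
    intro γ hγ hht
    have := ht_pos B hγ
    omega
  | succ n ih =>
    intro γ hγ hht
    by_cases hmem : γ ∈ B.Δ
    · exact Subgroup.subset_closure ⟨γ, hmem, rfl⟩
    · obtain ⟨α, hα, hip⟩ := exists_inner_pos B hγ
      have hne : γ ≠ α := fun h => hmem (h ▸ hα)
      obtain ⟨n₁, hn₁, hn₁ge⟩ := cpair_pos_int_ge_one hγ.1 (B.subset hα) hip
      set γ' := sref α γ with hγ'
      have hγ'pos : B.IsPos γ' := sref_simple_pos B hα hγ hne
      have hht' : B.ht γ' = B.ht γ - n₁ := ht_sref B hα hγ.1 hn₁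
      have h1 := ht_pos B hγ'pos
      have h2 := ht_pos B hγ
      have hle : (B.ht γ').toNat ≤ n := by omega
      have hws' : sref γ' ∈ WeylP B.Δ := ih γ' hγ'pos hle
      have hwsα : sref α ∈ WeylP B.Δ := Subgroup.subset_closure ⟨α, hα, rfl⟩
      have hγeq : γ = sref α γ' := by rw [hγ', sref_sref]
      rw [hγeq, sref_conj]
      exact mul_mem (mul_mem hwsα hws') (inv_mem hwsα)

theorem sref_root_mem_ws {γ : V} (hγ : γ ∈ R.Φ) : sref γ ∈ WeylP B.Δ := by
  rcases pos_or_neg B hγ with h | h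
  · exact sref_pos_mem_ws B _ γ h (le_refl _)
  · have : sref γ = sref (-γ) := by
      have := sref_neg_root (-γ)
      rw [neg_neg] at this
      exact this
    rw [this]
    exact sref_pos_mem_ws B _ (-γ) (isPos_neg B hγ h) (le_refl _)

theorem weyl_le_ws : R.Weyl ≤ WeylP B.Δ := by
  apply (Subgroup.closure_le _).mpr
  rintro x ⟨γ, hγ, rfl⟩
  exact sref_root_mem_ws B hγ

theorem exists_word {w : V ≃ₗᵢ[ℝ] V} (hw : w ∈ R.Weyl) :
    ∃ (n : ℕ) (g : Fin n → V), (∀ i, g i ∈ B.Δ) ∧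
      w = (List.ofFn fun i => sref (g i)).prod := by
  have hws : w ∈ WeylP B.Δ := weyl_le_ws B hw
  rw [WeylP] at hws
  have hsm : w ∈ Submonoid.closure ((sref '' (B.Δ : Set V)) ∪ (sref '' (B.Δ : Set V))⁻¹) := by
    rw [← Subgroup.closure_toSubmonoid]
    exact hws
  obtain ⟨l, hl, hlp⟩ := Submonoid.exists_list_of_mem_closure hsm
  have hl' : ∀ y ∈ l, ∃ α, α ∈ B.Δ ∧ y = sref α := by
    intro y hy
    rcases hl y hy with h | h
    · obtain ⟨α, hα, he⟩ := h
      exact ⟨α, hα, he.symm⟩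
    · rw [Set.mem_inv] at h
      obtain ⟨α, hα, he⟩ := h
      refine ⟨α, hα, ?_⟩
      rw [← sref_inv α, ← he.symm, inv_inv]
  have hl2 : ∀ i : Fin l.length, ∃ α, α ∈ B.Δ ∧ l.get i = sref α :=
    fun i => hl' _ (l.get_mem i)
  choose g hg1 hg2 using hl2
  refine ⟨l.length, g, hg1, ?_⟩
  rw [← hlp]
  congr 1
  refine List.ext_get (by simp) (fun i h1 h2 => ?_)
  rw [List.get_ofFn, hg2 ⟨i, h1⟩]
  congr 1

theorem prod_snoc {n : ℕ} (g : Fin (n+1) → V) :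
    (List.ofFn fun i => sref (g i)).prod =
      (List.ofFn fun i : Fin n => sref (g i.castSucc)).prod * sref (g (Fin.last n)) := by
  rw [List.ofFn_succ' (fun i => sref (g i)), List.prod_concat]

theorem word_prod_mem_weyl {n : ℕ} (g : Fin n → V) (hg : ∀ i, g i ∈ B.Δ) :
    (List.ofFn fun i => sref (g i)).prod ∈ R.Weyl := by
  apply list_prod_mem
  intro x hx
  rw [List.mem_ofFn] at hx
  obtain ⟨i, rfl⟩ := hx
  exact sref_mem_weyl (B.subset (hg i))

theorem lower_bound (φ : V → ℝ) (s : ℝ)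
    (hstep : ∀ γ, B.IsPos γ → (⟪γ,γ⟫:ℝ) = s → ∀ α ∈ B.Δ, γ ≠ α → φ γ ≤ φ (sref α γ) + 1)
    (hsimp : ∀ α ∈ B.Δ, (⟪α,α⟫:ℝ) = s → φ α ≤ 1) :
    ∀ n : ℕ, ∀ g : Fin n → V, (∀ i, g i ∈ B.Δ) → ∀ γ, B.IsPos γ → (⟪γ,γ⟫:ℝ) = s →
      B.IsNeg ((List.ofFn fun i => sref (g i)).prod γ) → φ γ ≤ n := by
  intro n
  induction n with
  | zero =>
    intro g hg γ hγpos hγs hγneg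
    exfalso
    have : (List.ofFn fun i : Fin 0 => sref (g i)) = [] := by simp
    rw [this] at hγneg
    have : ([] : List (V ≃ₗᵢ[ℝ] V)).prod γ = γ := rfl
    rw [this] at hγneg
    exact not_pos_and_neg B hγpos.1 ⟨hγpos, hγneg⟩
  | succ n ih =>
    intro g hg γ hγpos hγs hγneg
    rw [prod_snoc] at hγneg
    have hαΔ : g (Fin.last n) ∈ B.Δ := hg _
    have hγ1mem : sref (g (Fin.last n)) γ ∈ R.Φ :=
      R.reflect_mem _ (B.subset hαΔ) γ hγpos.1
    have hact : ((List.ofFn fun i : Fin n => sref (g i.castSucc)).prod * sref (g (Fin.last n))) γ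
        = (List.ofFn fun i : Fin n => sref (g i.castSucc)).prod (sref (g (Fin.last n)) γ) := rfl
    rw [hact] at hγneg
    rcases pos_or_neg B hγ1mem with hp | hn
    · have hne : γ ≠ g (Fin.last n) := by
        intro he
        apply not_pos_and_neg B hγ1mem
        refine ⟨hp, ?_⟩
        have : sref (g (Fin.last n)) γ = -γ := by rw [← he, sref_self]
        rw [this]
        exact isNeg_neg B hγpos.1 hγpos
      have h1 := hstep γ hγpos hγs _ hαΔ hne
      have hs1 : (⟪sref (g (Fin.last n)) γ, sref (g (Fin.last n)) γ⟫:ℝ) = s := by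
        rw [inner_weyl]; exact hγs
      have h2 := ih (fun i => g i.castSucc) (fun i => hg _) _ hp hs1 hγneg
      push_cast
      linarith
    · have he : γ = g (Fin.last n) := sref_simple_neg_imp B hαΔ hγpos hn
      have := hsimp _ hαΔ (by rw [← he]; exact hγs)
      push_cast
      rw [he]
      linarith
  
theorem upper_bound (φ : V → ℝ) (s : ℝ)
    (hstep : ∀ γ, B.IsPos γ → (⟪γ,γ⟫:ℝ) = s → ∀ α ∈ B.Δ, γ ≠ α → 0 < (⟪γ,α⟫:ℝ) → φ (sref α γ) = φ γ - 1)
    (hsimp : ∀ α ∈ B.Δ, (⟪α,α⟫:ℝ) = s → φ α = 1) :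
    ∀ n : ℕ, ∀ γ, B.IsPos γ → (⟪γ,γ⟫:ℝ) = s → (B.ht γ).toNat ≤ n →
      ∃ (k : ℕ) (g : Fin k → V), (∀ i, g i ∈ B.Δ) ∧ (k:ℝ) = φ γ ∧
        B.IsNeg ((List.ofFn fun i => sref (g i)).prod γ) := by
  intro n
  induction n with
  | zero =>
    intro γ hγpos hγs hht
    have := ht_pos B hγpos
    omega
  | succ n ih =>
    intro γ hγpos hγs hht
    by_cases hmem : γ ∈ B.Δ
    · refine ⟨1, fun _ => γ, fun _ => hmem, by rw [hsimp γ hmem hγs]; norm_num, ?_⟩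
      have hl : (List.ofFn fun _ : Fin 1 => sref γ) = [sref γ] := by
        simp [List.ofFn_succ]
      rw [hl]
      have : ([sref γ] : List (V ≃ₗᵢ[ℝ] V)).prod = sref γ := by simp
      rw [this, sref_self]
      exact isNeg_neg B hγpos.1 hγpos
    · obtain ⟨α, hα, hip⟩ := exists_inner_pos B hγpos
      have hne : γ ≠ α := fun h => hmem (h ▸ hα)
      obtain ⟨n₁, hn₁, hn₁ge⟩ := cpair_pos_int_ge_one hγpos.1 (B.subset hα) hip
      have hγ'pos : B.IsPos (sref α γ) := sref_simple_pos B hα hγpos hne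
      have hht' : B.ht (sref α γ) = B.ht γ - n₁ := ht_sref B hα hγpos.1 hn₁
      have h1 := ht_pos B hγ'pos
      have h2 := ht_pos B hγpos
      have hle : (B.ht (sref α γ)).toNat ≤ n := by omega
      have hs1 : (⟪sref α γ, sref α γ⟫:ℝ) = s := by rw [inner_weyl]; exact hγs
      obtain ⟨k, g, hg, hkφ, hneg⟩ := ih (sref α γ) hγ'pos hs1 hle
      refine ⟨k + 1, Fin.snoc g α, ?_, ?_, ?_⟩
      · intro i
        refine Fin.lastCases ?_ (fun j => ?_) i
        · simp only [Fin.snoc_last]; exact hα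
        · simp only [Fin.snoc_castSucc]; exact hg j
      · rw [hstep γ hγpos hγs α hα hne hip] at hkφ
        push_cast
        linarith
      · rw [prod_snoc]
        simp only [Fin.snoc_last, Fin.snoc_castSucc]
        exact hneg

theorem depth_eq_phi (φ : V → ℝ) (s : ℝ) {β : V} (hβpos : B.IsPos β) (hβs : (⟪β,β⟫:ℝ) = s)
    (hstepLB : ∀ γ, B.IsPos γ → (⟪γ,γ⟫:ℝ) = s → ∀ α ∈ B.Δ, γ ≠ α → φ γ ≤ φ (sref α γ) + 1)
    (hstepUB : ∀ γ, B.IsPos γ → (⟪γ,γ⟫:ℝ) = s → ∀ α ∈ B.Δ, γ ≠ α → 0 < (⟪γ,α⟫:ℝ) →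
      φ (sref α γ) = φ γ - 1)
    (hsimp : ∀ α ∈ B.Δ, (⟪α,α⟫:ℝ) = s → φ α = 1) :
    (B.depth β : ℝ) = φ β := by
  obtain ⟨k, g, hg, hkφ, hneg⟩ := upper_bound B φ s hstepUB hsimp (B.ht β).toNat β hβpos hβs
    (le_refl _)
  set w₀ : V ≃ₗᵢ[ℝ] V := (List.ofFn fun i => sref (g i)).prod with hw₀
  have hw₀W : w₀ ∈ R.Weyl := word_prod_mem_weyl B g hg
  have hlen0 : B.len w₀ ≤ k := Nat.sInf_le ⟨g, hg, rfl⟩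
  set S : Set ℕ := {n | ∃ w ∈ R.Weyl, B.len w = n ∧ B.IsNeg (w β)} with hS
  have hmemS : B.len w₀ ∈ S := ⟨w₀, hw₀W, rfl, hneg⟩
  have hSne : S.Nonempty := ⟨_, hmemS⟩
  have hdS : B.depth β ∈ S := Nat.sInf_mem hSne
  obtain ⟨w, hwW, hwlen, hwneg⟩ := hdS
  -- get a word of length exactly len w
  have hTne : {n | ∃ g' : Fin n → V, (∀ i, g' i ∈ B.Δ) ∧
      w = (List.ofFn fun i => sref (g' i)).prod}.Nonempty := by
    obtain ⟨n, g', hg', he⟩ := exists_word B hwW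
    exact ⟨n, g', hg', he⟩
  have hwlenmem := Nat.sInf_mem hTne
  obtain ⟨g1, hg1, hwe⟩ := hwlenmem
  have hLB : φ β ≤ (B.len w : ℝ) :=
    lower_bound B φ s hstepLB (fun α hα hαs => le_of_eq (hsimp α hα hαs)) (B.len w) g1 hg1 β
      hβpos hβs (by
        have hx : B.IsNeg (w β) := hwneg
        rw [hwe] at hx
        exact hx)
  have hdle : B.depth β ≤ B.len w₀ := Nat.sInf_le hmemS
  have hd2 : (B.depth β : ℝ) ≤ k := by
    have : B.depth β ≤ k := le_trans hdle hlen0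
    exact_mod_cast this
  rw [hwlen] at hLB
  rw [hkφ] at hd2
  linarith

end DepthPf
end DepthProof

/-- for a positive long root `β`, the depth of `β` (the minimal `k`
such that some `w ∈ W` of length `k` has `w(β) < 0`) equals `ht∨(β)`, the height of
the coroot `β∨`; for a positive short root `β`, the depth of `β` equals its height
`ht(β)`. -/
theorem depth_eq_height (R : NRootSystem V) (B : Base R) {β : V} (hβpos : B.IsPos β) :
    (R.IsLong β → (B.depth β : ℝ) = B.htv β) ∧
    (R.IsShort β → (B.depth β : ℤ) = B.ht β) := by
  constructor
  · -- long root: depth = htv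
    intro hlong
    apply DepthPf.depth_eq_phi B B.htv R.r hβpos hlong.2
    · -- LB step
      intro γ hγpos hγs α hα hne
      obtain ⟨n, hn⟩ := DepthPf.cpair_int hγpos.1 (B.subset hα)
      rw [DepthPf.htv_sref B hα hγpos.1 hn]
      have habs : |cpair α γ| ≤ 1 := by
        apply DepthPf.cpair_abs_le_one (B.subset hα) hγpos.1
        · rw [hγs]; exact DepthPf.le_r (B.subset hα)
        · exact fun h => hne h.symm
        · exact DepthPf.ne_neg_simple' B hγpos hα
      have := abs_le.mp habs
      linarith [this.1, this.2]
    · -- UB step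
      intro γ hγpos hγs α hα hne hip
      obtain ⟨n, hn⟩ := DepthPf.cpair_int hγpos.1 (B.subset hα)
      rw [DepthPf.htv_sref B hα hγpos.1 hn]
      have h1 : cpair α γ = 1 := by
        apply DepthPf.cpair_eq_one (B.subset hα) hγpos.1
        · rw [hγs]; exact DepthPf.le_r (B.subset hα)
        · exact fun h => hne h.symm
        · exact DepthPf.ne_neg_simple' B hγpos hα
        · rw [real_inner_comm]; exact hip
      rw [h1]
    · -- simple
      intro α hα _
      exact DepthPf.htv_simple B hα
  · -- short root: depth = ht
    intro hshort
    have hβ1 : (⟪β,β⟫:ℝ) = 1 := DepthPf.short_norm_one hβpos.1 hshort.2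
    have key : (B.depth β : ℝ) = ((B.ht β : ℤ) : ℝ) := by
      apply DepthPf.depth_eq_phi B (fun γ => ((B.ht γ : ℤ) : ℝ)) 1 hβpos hβ1
      · -- LB step
        intro γ hγpos hγs α hα hne
        obtain ⟨n, hn⟩ := DepthPf.cpair_int hγpos.1 (B.subset hα)
        rw [DepthPf.ht_sref B hα hγpos.1 hn]
        have habs : |cpair γ α| ≤ 1 := by
          apply DepthPf.cpair_abs_le_one hγpos.1 (B.subset hα)
          · rw [hγs]; exact R.norm_one_le α (B.subset hα)
          · exact hne
          · exact DepthPf.pos_ne_neg_simple B hγpos hα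
        rw [hn] at habs
        rw [← Int.cast_abs] at habs
        have h2 : |n| ≤ 1 := by exact_mod_cast habs
        obtain ⟨hb1, hb2⟩ := abs_le.mp h2
        have hn1 : ((n:ℤ):ℝ) ≤ 1 := by exact_mod_cast hb2
        push_cast
        linarith
      · -- UB step
        intro γ hγpos hγs α hα hne hip
        obtain ⟨n, hn⟩ := DepthPf.cpair_int hγpos.1 (B.subset hα)
        rw [DepthPf.ht_sref B hα hγpos.1 hn]
        have h1 : cpair γ α = 1 := by
          apply DepthPf.cpair_eq_one hγpos.1 (B.subset hα)
          · rw [hγs]; exact R.norm_one_le α (B.subset hα)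
          · exact hne
          · exact DepthPf.pos_ne_neg_simple B hγpos hα
          · exact hip
        rw [hn] at h1
        have : n = 1 := by exact_mod_cast h1
        rw [this]
        push_cast
        ring
      · -- simple
        intro α hα _
        rw [DepthPf.ht_simple B hα]
        norm_num
    exact_mod_cast key
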